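/- arXiv:1506.08022 — 3 statements merged into one kernel-verified Lean document; each statement's English description precedes it below -/
import Mathlib

section
/- Consider the multiple regression model Y = BX + ε, where X is an ℝᵖ-valued centered square-integrable random vector with invertible covariance V₁ = 𝔼(XXᵀ), B is a q×p real matrix, ε is an ℝ^q-valued centered random vector independent of X, and set V₁₂ = 𝔼(XYᵀ). Let I₁ = {j ∈ {1,…,p} : column b_{•j} of B is nonzero}, and for K ⊆ {1,…,p} define ξ_K = ‖V₁₂ − V₁ Π_K V₁₂‖ with Π_K = A_K*(A_K V₁ A_K*)⁻¹ A_K. Then ξ_K = 0 if and only if I₁ ⊆ K. -/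
open Matrix MeasureTheory ProbabilityTheory

attribute [local instance] Matrix.frobeniusNormedAddCommGroup

/-- The coordinate-restriction map `A_K : ℝᵖ → ℝ^{|K|}` as a matrix. -/
noncomputable def AK (p : ℕ) (K : Finset (Fin p)) : Matrix {i // i ∈ K} (Fin p) ℝ :=
  fun k j => if (k : Fin p) = j then 1 else 0

/-- `Π_K := A_K* (A_K V A_K*)⁻¹ A_K`. -/
noncomputable def PiK (p : ℕ) (K : Finset (Fin p)) (V : Matrix (Fin p) (Fin p) ℝ) :
    Matrix (Fin p) (Fin p) ℝ :=
  (AK p K)ᵀ * (AK p K * V * (AK p K)ᵀ)⁻¹ * (AK p K)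

private lemma memL2_integrable_mul {Ω : Type*} [MeasurableSpace Ω] {μ : Measure Ω}
    {f g : Ω → ℝ} (hf : MemLp f 2 μ) (hg : MemLp g 2 μ) :
    Integrable (fun ω => f ω * g ω) μ := by
  have h := MeasureTheory.L2.integrable_inner (𝕜 := ℝ) (hf.toLp f) (hg.toLp g)
  refine h.congr ?_
  filter_upwards [hf.coeFn_toLp, hg.coeFn_toLp] with ω h1 h2
  simp [h1, h2, RCLike.inner_apply, mul_comm]

theorem stmt3 {p q : ℕ} {Ω : Type*} [MeasurableSpace Ω] (μ : Measure Ω)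
    [IsProbabilityMeasure μ]
    (X : Ω → Fin p → ℝ) (Y : Ω → Fin q → ℝ) (ε : Ω → Fin q → ℝ)
    (B : Matrix (Fin q) (Fin p) ℝ)
    -- the multiple regression model `Y = BX + ε`
    (hmodel : ∀ ω, Y ω = B.mulVec (X ω) + ε ω)
    (hXmeas : Measurable X) (hεmeas : Measurable ε)
    -- square integrability
    (hXL2 : ∀ i, MemLp (fun ω => X ω i) 2 μ)
    (hεL2 : ∀ j, MemLp (fun ω => ε ω j) 2 μ)
    -- `X` and `ε` are centered
    (hXcent : ∀ i, ∫ ω, X ω i ∂μ = 0)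
    (hεcent : ∀ j, ∫ ω, ε ω j ∂μ = 0)
    -- `ε` is independent of `X`
    (hindep : IndepFun X ε μ)
    -- covariance operators
    (V₁ : Matrix (Fin p) (Fin p) ℝ) (hV₁ : V₁ = fun i j => ∫ ω, X ω i * X ω j ∂μ)
    (hV₁inv : IsUnit V₁)
    (V₁₂ : Matrix (Fin p) (Fin q) ℝ) (hV₁₂ : V₁₂ = fun i j => ∫ ω, X ω i * Y ω j ∂μ)
    (K : Finset (Fin p)) (hK : K.Nonempty) :
    ‖V₁₂ - V₁ * PiK p K V₁ * V₁₂‖ = 0 ↔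
      {j : Fin p | (fun i => B i j) ≠ 0} ⊆ ↑K := by
  classical
  -- basic integrability facts
  have hXi : ∀ i, Integrable (fun ω => X ω i) μ := fun i =>
    (hXL2 i).integrable (by norm_num)
  have hεi : ∀ j, Integrable (fun ω => ε ω j) μ := fun j =>
    (hεL2 j).integrable (by norm_num)
  have hXX : ∀ i k, Integrable (fun ω => X ω i * X ω k) μ := fun i k =>
    memL2_integrable_mul (hXL2 i) (hXL2 k)
  have hXε : ∀ i j, Integrable (fun ω => X ω i * ε ω j) μ := fun i j =>
    memL2_integrable_mul (hXL2 i) (hεL2 j)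
  -- Step 1 : V₁₂ = V₁ * Bᵀ
  have h12 : V₁₂ = V₁ * Bᵀ := by
    ext i j
    have hptw : ∀ ω, X ω i * Y ω j =
        (∑ k, B j k * (X ω i * X ω k)) + X ω i * ε ω j := by
      intro ω
      rw [hmodel ω]
      simp only [Pi.add_apply, Matrix.mulVec, dotProduct, mul_add, Finset.mul_sum]
      congr 1
      exact Finset.sum_congr rfl fun k _ => by ring
    have hind_ij : IndepFun (fun ω => X ω i) (fun ω => ε ω j) μ :=
      hindep.comp (measurable_pi_apply i) (measurable_pi_apply j)
    have hεterm : ∫ ω, X ω i * ε ω j ∂μ = 0 := by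
      have h : ∫ ω, X ω i * ε ω j ∂μ = (∫ ω, X ω i ∂μ) * ∫ ω, ε ω j ∂μ :=
        hind_ij.integral_fun_mul_eq_mul_integral (hXi i).aestronglyMeasurable (hεi j).aestronglyMeasurable
      rw [hεcent j, mul_zero] at h
      simpa [Pi.mul_apply] using h
    have hsumint : Integrable (fun ω => ∑ k, B j k * (X ω i * X ω k)) μ :=
      integrable_finset_sum _ fun k _ => (hXX i k).const_mul _
    calc V₁₂ i j = ∫ ω, X ω i * Y ω j ∂μ := by rw [hV₁₂]
      _ = ∫ ω, ((∑ k, B j k * (X ω i * X ω k)) + X ω i * ε ω j) ∂μ := by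
          simp_rw [hptw]
      _ = (∫ ω, ∑ k, B j k * (X ω i * X ω k) ∂μ) + ∫ ω, X ω i * ε ω j ∂μ :=
          integral_add hsumint (hXε i j)
      _ = ∑ k, B j k * ∫ ω, X ω i * X ω k ∂μ := by
          rw [hεterm, add_zero, integral_finset_sum _ fun k _ => (hXX i k).const_mul _]
          exact Finset.sum_congr rfl fun k _ => integral_const_mul _ _
      _ = (V₁ * Bᵀ) i j := by
          rw [Matrix.mul_apply, hV₁]
          exact Finset.sum_congr rfl fun k _ => by
            simp [Matrix.transpose_apply, mul_comm]
  -- Step 2 : V₁ is positive semidefinite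
  have hV₁sym : V₁.IsHermitian := by
    ext i j
    simp only [Matrix.conjTranspose_apply, star_trivial]
    simp only [hV₁]
    simp_rw [mul_comm]
  have hV₁psd : V₁.PosSemidef := by
    refine Matrix.PosSemidef.of_dotProduct_mulVec_nonneg hV₁sym fun x => ?_
    have key : star x ⬝ᵥ V₁ *ᵥ x = ∫ ω, (∑ i, x i * X ω i) ^ 2 ∂μ := by
      have hptw : ∀ ω, (∑ i, x i * X ω i) ^ 2 =
          ∑ i, ∑ k, x i * (x k * (X ω i * X ω k)) := by
        intro ω
        rw [sq, Finset.sum_mul_sum]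
        exact Finset.sum_congr rfl fun i _ => Finset.sum_congr rfl fun k _ => by ring
      simp_rw [hptw]
      rw [integral_finset_sum _ fun i _ =>
        integrable_finset_sum _ fun k _ => (((hXX i k).const_mul _).const_mul _)]
      simp only [dotProduct, Matrix.mulVec, Pi.star_apply, star_trivial, hV₁]
      refine Finset.sum_congr rfl fun i _ => ?_
      rw [integral_finset_sum _ fun k _ => (((hXX i k).const_mul _).const_mul _),
        Finset.mul_sum]
      refine Finset.sum_congr rfl fun k _ => ?_
      rw [integral_const_mul, integral_const_mul]
      ring
    rw [key]
    exact integral_nonneg fun ω => sq_nonneg _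
  -- mulVec with V₁ is injective
  have hV₁det : IsUnit V₁.det := (Matrix.isUnit_iff_isUnit_det V₁).mp hV₁inv
  have hV₁mv : ∀ v : Fin p → ℝ, V₁ *ᵥ v = 0 → v = 0 := by
    intro v hv
    have : V₁⁻¹ *ᵥ (V₁ *ᵥ v) = v := by
      rw [Matrix.mulVec_mulVec, Matrix.nonsing_inv_mul V₁ hV₁det, Matrix.one_mulVec]
    rw [← this, hv, Matrix.mulVec_zero]
  set A := AK p K with hA
  -- Step 3 : S := A * V₁ * Aᵀ is positive definite, hence invertible
  set S : Matrix {i // i ∈ K} {i // i ∈ K} ℝ := A * V₁ * Aᵀ with hS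
  have hAv : ∀ (x : {i // i ∈ K} → ℝ) (j : Fin p), (Aᵀ *ᵥ x) j =
      ∑ k : {i // i ∈ K}, (if (k : Fin p) = j then x k else 0) := by
    intro x j
    simp only [Matrix.mulVec, dotProduct, Matrix.transpose_apply, hA, AK,
      ite_mul, one_mul, zero_mul]
  have hSpsd : S.PosSemidef := by
    have h := hV₁psd.mul_mul_conjTranspose_same A
    rwa [Matrix.conjTranspose_eq_transpose_of_trivial] at h
  have hSpd : S.PosDef := by
    refine Matrix.PosDef.of_dotProduct_mulVec_pos hSpsd.1 ?_
    · intro x hx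
      have hxv : star x ⬝ᵥ S *ᵥ x = star (Aᵀ *ᵥ x) ⬝ᵥ V₁ *ᵥ (Aᵀ *ᵥ x) := by
        simp only [star_trivial, hS]
        rw [← Matrix.mulVec_mulVec, ← Matrix.mulVec_mulVec,
          dotProduct_mulVec x A, ← Matrix.mulVec_transpose]
      have hvne : Aᵀ *ᵥ x ≠ 0 := by
        intro h0
        apply hx
        funext k
        have := congrFun h0 (k : Fin p)
        rw [hAv x (k : Fin p)] at this
        rw [Finset.sum_eq_single k (fun b _ hb => by
          simp [Subtype.coe_injective.ne hb]) (fun h => absurd (Finset.mem_univ k) h)]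
          at this
        simpa using this
      have hge : 0 ≤ star x ⬝ᵥ S *ᵥ x := by
        rw [hxv]; exact hV₁psd.dotProduct_mulVec_nonneg _
      have hne : star x ⬝ᵥ S *ᵥ x ≠ 0 := by
        rw [hxv]
        intro h0
        exact hvne (hV₁mv _ ((hV₁psd.dotProduct_mulVec_zero_iff _).mp h0))
      exact lt_of_le_of_ne hge (Ne.symm hne)
  have hSdet : IsUnit S.det := (Matrix.isUnit_iff_isUnit_det S).mp hSpd.isUnit
  -- Step 4 : Π_K V₁ Aᵀ = Aᵀ
  have hproj : PiK p K V₁ * V₁ * Aᵀ = Aᵀ := by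
    have : PiK p K V₁ * V₁ * Aᵀ = Aᵀ * (S⁻¹ * S) := by
      simp only [PiK, hS, ← hA, Matrix.mul_assoc]
    rw [this, Matrix.nonsing_inv_mul S hSdet, Matrix.mul_one]
  -- Step 5 : the equivalence
  rw [norm_eq_zero, sub_eq_zero, h12]
  have hcancel : V₁ * Bᵀ = V₁ * PiK p K V₁ * (V₁ * Bᵀ) ↔
      Bᵀ = PiK p K V₁ * V₁ * Bᵀ := by
    constructor
    · intro h
      have := congrArg (fun M => V₁⁻¹ * M) h
      simpa [← Matrix.mul_assoc, Matrix.nonsing_inv_mul V₁ hV₁det] using this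
    · intro h
      calc V₁ * Bᵀ = V₁ * (PiK p K V₁ * V₁ * Bᵀ) := by rw [← h]
        _ = V₁ * PiK p K V₁ * (V₁ * Bᵀ) := by simp [Matrix.mul_assoc]
  rw [hcancel]
  constructor
  · -- if the projection fixes Bᵀ then columns outside K vanish
    intro h j hj
    by_contra hjK
    apply hj
    funext i
    -- (Π_K V₁ Bᵀ) j i = 0 because row j of Aᵀ is zero for j ∉ K
    have hrow : ∀ i', (PiK p K V₁ * V₁ * Bᵀ) j i' = 0 := by
      intro i'
      have : PiK p K V₁ * V₁ * Bᵀ = Aᵀ * ((S⁻¹ * A) * V₁ * Bᵀ) := by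
        simp only [PiK, ← hA, hS, Matrix.mul_assoc]
      rw [this, Matrix.mul_apply]
      refine Finset.sum_eq_zero fun k _ => ?_
      have hkj : (k : Fin p) ≠ j := fun hkj => hjK (by rw [← hkj]; exact k.2)
      simp [Matrix.transpose_apply, hA, AK, hkj]
    have := congrFun (congrFun h j) i
    rw [hrow i] at this
    simpa [Matrix.transpose_apply] using this
  · -- if columns outside K vanish then the projection fixes Bᵀ
    intro hsub
    have hBsupp : ∀ j ∉ K, ∀ i, B i j = 0 := by
      intro j hj i
      by_contra hB0
      exact hj (hsub (by simp only [Set.mem_setOf_eq]; intro h0; exact hB0 (congrFun h0 i)))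
    have hAmul : ∀ (N : Matrix (Fin p) (Fin q) ℝ) (k : {i // i ∈ K}) (i : Fin q),
        (A * N) k i = N (k : Fin p) i := by
      intro N k i
      rw [Matrix.mul_apply, Finset.sum_eq_single ((k : Fin p))]
      · simp [hA, AK]
      · intro b _ hb
        simp [hA, AK, Ne.symm hb]
      · exact fun h => absurd (Finset.mem_univ _) h
    have hBrepr : Bᵀ = Aᵀ * (A * Bᵀ) := by
      ext j i
      rw [Matrix.mul_apply]
      by_cases hj : j ∈ K
      · rw [Finset.sum_eq_single (⟨j, hj⟩ : {i // i ∈ K})]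
        · rw [hAmul]
          simp [hA, AK]
        · intro b _ hb
          have hbj : (b : Fin p) ≠ j := fun hbj => hb (Subtype.ext hbj)
          simp [Matrix.transpose_apply, hA, AK, hbj]
        · exact fun h => absurd (Finset.mem_univ _) h
      · rw [Finset.sum_eq_zero fun k _ => by
          have hkj : (k : Fin p) ≠ j := fun hkj => hj (hkj ▸ k.2)
          simp [Matrix.transpose_apply, hA, AK, hkj]]
        simp [Matrix.transpose_apply, hBsupp j hj i]
    calc Bᵀ = Aᵀ * (A * Bᵀ) := hBrepr
      _ = (PiK p K V₁ * V₁ * Aᵀ) * (A * Bᵀ) := by rw [hproj]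
      _ = PiK p K V₁ * V₁ * (Aᵀ * (A * Bᵀ)) := by simp [Matrix.mul_assoc]
      _ = PiK p K V₁ * V₁ * Bᵀ := by rw [← hBrepr]
end

section
/- Deterministic version of Lemma 1: Let V₁ be symmetric positive definite on ℝᵖ, B a q×p matrix, and V₁₂ = V₁ Bᵀ. For nonempty K ⊆ {1,…,p}, ‖V₁₂ − V₁ Π_K V₁₂‖ = 0 if and only if b_{•j} = 0 for all j ∉ K. -/
open Matrix

attribute [local instance] Matrix.frobeniusNormedAddCommGroup

lemma AK_mul_apply {p : ℕ} (K : Finset (Fin p)) {m : Type*} [Fintype m]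
    (X : Matrix (Fin p) m ℝ) (k : {i // i ∈ K}) (c : m) :
    (AK p K * X) k c = X k.val c := by
  rw [Matrix.mul_apply]
  simp [AK, ite_mul]

lemma AKT_mul_apply {p : ℕ} (K : Finset (Fin p)) {m : Type*} [Fintype m]
    (Y : Matrix {i // i ∈ K} m ℝ) (j : Fin p) (c : m) :
    ((AK p K)ᵀ * Y) j c = if h : j ∈ K then Y ⟨j, h⟩ c else 0 := by
  rw [Matrix.mul_apply]
  simp only [transpose_apply, AK, ite_mul, one_mul, zero_mul]
  split
  · next h =>
    rw [Fintype.sum_eq_single ⟨j, h⟩]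
    · simp
    · intro k hk
      rw [if_neg]
      exact fun hkj => hk (Subtype.ext hkj)
  · next h =>
    apply Finset.sum_eq_zero
    intro k _
    rw [if_neg]
    exact fun hkj => h (hkj ▸ k.2)

lemma AKT_mulVec_apply {p : ℕ} (K : Finset (Fin p)) (x : {i // i ∈ K} → ℝ) (j : Fin p) :
    ((AK p K)ᵀ *ᵥ x) j = if h : j ∈ K then x ⟨j, h⟩ else 0 := by
  rw [Matrix.mulVec]
  simp only [dotProduct, transpose_apply, AK, ite_mul, one_mul, zero_mul]
  split
  · next h =>
    rw [Fintype.sum_eq_single ⟨j, h⟩]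
    · simp
    · intro k hk
      rw [if_neg]
      exact fun hkj => hk (Subtype.ext hkj)
  · next h =>
    apply Finset.sum_eq_zero
    intro k _
    rw [if_neg]
    exact fun hkj => h (hkj ▸ k.2)

lemma M_posDef {p : ℕ} (K : Finset (Fin p)) (V₁ : Matrix (Fin p) (Fin p) ℝ)
    (hV₁ : V₁.PosDef) : (AK p K * V₁ * (AK p K)ᵀ).PosDef := by
  have hconj : (AK p K)ᴴ = (AK p K)ᵀ := by
    ext k j; simp [conjTranspose_apply]
  refine Matrix.PosDef.of_dotProduct_mulVec_pos ?_ ?_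
  · have := (hV₁.posSemidef.mul_mul_conjTranspose_same (AK p K)).1
    rwa [hconj] at this
  · intro x hx
    have hy : (AK p K)ᵀ *ᵥ x ≠ 0 := by
      obtain ⟨k, hk⟩ := Function.ne_iff.mp hx
      intro h0
      apply hk
      have := congrFun h0 k.val
      rwa [AKT_mulVec_apply, dif_pos k.2, Subtype.coe_eta] at this
    have key := hV₁.dotProduct_mulVec_pos hy
    rw [star_trivial] at key ⊢
    rw [← Matrix.mulVec_mulVec, ← Matrix.mulVec_mulVec,
      Matrix.dotProduct_mulVec x (AK p K), ← Matrix.mulVec_transpose]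
    exact key

theorem stmt5 {p q : ℕ} (K : Finset (Fin p)) (hK : K.Nonempty)
    (V₁ : Matrix (Fin p) (Fin p) ℝ) (hV₁ : V₁.PosDef)
    (B : Matrix (Fin q) (Fin p) ℝ)
    (V₁₂ : Matrix (Fin p) (Fin q) ℝ) (hV₁₂ : V₁₂ = V₁ * Bᵀ) :
    ‖V₁₂ - V₁ * PiK p K V₁ * V₁₂‖ = 0 ↔
      ∀ j ∉ K, (fun i => B i j) = 0 := by
  have hM := M_posDef K V₁ hV₁
  have hMdet : IsUnit (AK p K * V₁ * (AK p K)ᵀ).det :=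
    (Matrix.isUnit_iff_isUnit_det _).mp hM.isUnit
  have hVdet : IsUnit V₁.det := (Matrix.isUnit_iff_isUnit_det _).mp hV₁.isUnit
  rw [norm_eq_zero, sub_eq_zero, hV₁₂]
  constructor
  · intro h j hj
    have h2 : Bᵀ = PiK p K V₁ * (V₁ * Bᵀ) := by
      have := congrArg (fun X => V₁⁻¹ * X) h
      simpa [← Matrix.mul_assoc, Matrix.nonsing_inv_mul _ hVdet] using this
    funext i
    have h3 := congrFun (congrFun h2 j) i
    rw [transpose_apply] at h3
    rw [PiK, Matrix.mul_assoc, Matrix.mul_assoc, AKT_mul_apply, dif_neg hj] at h3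
    exact h3
  · intro h
    have hBT : Bᵀ = (AK p K)ᵀ * (AK p K * Bᵀ) := by
      ext j c
      rw [AKT_mul_apply]
      split
      · next hjK => rw [AK_mul_apply]
      · next hjK =>
        rw [transpose_apply]
        exact congrFun (h j hjK) c
    have key : PiK p K V₁ * (V₁ * Bᵀ) = Bᵀ := by
      calc PiK p K V₁ * (V₁ * Bᵀ)
          = (AK p K)ᵀ * ((AK p K * V₁ * (AK p K)ᵀ)⁻¹ *
            ((AK p K * V₁ * (AK p K)ᵀ) * (AK p K * Bᵀ))) := by
            rw [PiK]
            conv_lhs => rw [hBT]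
            simp only [Matrix.mul_assoc]
        _ = (AK p K)ᵀ * (AK p K * Bᵀ) := by
            rw [← Matrix.mul_assoc ((AK p K * V₁ * (AK p K)ᵀ)⁻¹),
              Matrix.nonsing_inv_mul _ hMdet, Matrix.one_mul]
        _ = Bᵀ := hBT.symm
    rw [Matrix.mul_assoc, key]
end

section
/- Let L₁ : ℝᵖ → H be linear with V₁ = L₁*L₁ invertible, L₂ : ℝ^q → H linear, V₁₂ = L₁*L₂, and K ⊆ {1,…,p} nonempty. Then V₁₂ − V₁ Π_K V₁₂ = L₁* Q L₂, where Q is the orthogonal projection of H onto the orthogonal complement of range(L₁ A_K*) and Π_K = A_K*(A_K V₁ A_K*)⁻¹ A_K. Consequently ξ_K := ‖V₁₂ − V₁ Π_K V₁₂‖ = ‖L₁* Q L₂‖. -/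
open ContinuousLinearMap Matrix
open scoped RealInnerProductSpace

/-- The coordinate-restriction map `A_K : ℝᵖ → ℝ^{|K|}` as a continuous linear map
between Euclidean spaces. -/
noncomputable def AKc (p : ℕ) (K : Finset (Fin p)) :
    EuclideanSpace ℝ (Fin p) →L[ℝ] EuclideanSpace ℝ {i // i ∈ K} :=
  LinearMap.toContinuousLinearMap
    { toFun := fun x => WithLp.toLp 2 (fun k => x k.1)
      map_add' := fun _ _ => rfl
      map_smul' := fun _ _ => rfl }

set_option maxHeartbeats 1000000 in
theorem stmt15 {p q : ℕ} {H : Type*} [NormedAddCommGroup H] [InnerProductSpace ℝ H]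
    [CompleteSpace H]
    (L₁ : EuclideanSpace ℝ (Fin p) →L[ℝ] H) (L₂ : EuclideanSpace ℝ (Fin q) →L[ℝ] H)
    (V₁ : EuclideanSpace ℝ (Fin p) →L[ℝ] EuclideanSpace ℝ (Fin p))
    (hV₁ : V₁ = L₁.adjoint ∘L L₁) (hV₁inv : Function.Bijective V₁)
    (V₁₂ : EuclideanSpace ℝ (Fin q) →L[ℝ] EuclideanSpace ℝ (Fin p))
    (hV₁₂ : V₁₂ = L₁.adjoint ∘L L₂)
    (K : Finset (Fin p)) (hK : K.Nonempty)
    -- `Π_K := A_K* (A_K V₁ A_K*)⁻¹ A_K`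
    (PiK : EuclideanSpace ℝ (Fin p) →L[ℝ] EuclideanSpace ℝ (Fin p))
    (hPiK : PiK = (AKc p K).adjoint ∘L
      Ring.inverse (AKc p K ∘L V₁ ∘L (AKc p K).adjoint) ∘L AKc p K)
    -- `Q` : the orthogonal projection of `H` onto `range(L₁ A_K*)ᗮ`
    (Q : H →L[ℝ] H)
    (hQ : Q = (LinearMap.range (L₁ ∘L (AKc p K).adjoint : EuclideanSpace ℝ {i // i ∈ K} →ₗ[ℝ] H))ᗮ.subtypeL ∘L
      Submodule.orthogonalProjectionOnto (LinearMap.range (L₁ ∘L (AKc p K).adjoint : EuclideanSpace ℝ {i // i ∈ K} →ₗ[ℝ] H))ᗮ) :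
    V₁₂ - V₁ ∘L PiK ∘L V₁₂ = L₁.adjoint ∘L Q ∘L L₂ ∧
      ‖V₁₂ - V₁ ∘L PiK ∘L V₁₂‖ = ‖L₁.adjoint ∘L Q ∘L L₂‖ := by
  classical
  set A := AKc p K with hA
  set M : EuclideanSpace ℝ {i // i ∈ K} →L[ℝ] H := L₁ ∘L A.adjoint with hM
  set T : EuclideanSpace ℝ {i // i ∈ K} →L[ℝ] EuclideanSpace ℝ {i // i ∈ K} :=
    M.adjoint ∘L M with hT
  have hAsurj : Function.Surjective A := by
    intro y
    refine ⟨WithLp.toLp 2 (fun i => if h : i ∈ K then y ⟨i, h⟩ else 0), ?_⟩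
    ext k
    show (if h : (k : Fin p) ∈ K then y ⟨k, h⟩ else 0) = y k
    simp [k.2]
  have hL₁inj : Function.Injective L₁ := by
    intro x y hxy
    apply hV₁inv.injective
    rw [hV₁]; simp [hxy]
  have hAadjinj : Function.Injective A.adjoint := by
    intro x y hxy
    have h : ∀ z, @inner ℝ _ _ (x - y) z = 0 := by
      intro z
      obtain ⟨w, rfl⟩ := hAsurj z
      rw [← ContinuousLinearMap.adjoint_inner_left]
      simp [hxy]
    have := h (x - y)
    rwa [inner_self_eq_zero, sub_eq_zero] at this
  have hMinj : Function.Injective M := fun x y hxy =>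
    hAadjinj (hL₁inj hxy)
  have hTinj : Function.Injective T := by
    intro x y hxy
    apply hMinj
    have h : @inner ℝ _ _ (M (x - y)) (M (x - y)) = 0 := by
      rw [← ContinuousLinearMap.adjoint_inner_left]
      have : T (x - y) = 0 := by simp [hT] at hxy ⊢; simp [hxy, sub_eq_zero]
      simp [hT] at this
      simp [this]
    rw [inner_self_eq_zero] at h
    rwa [map_sub, sub_eq_zero] at h
  have hTbij : Function.Bijective T :=
    ⟨hTinj, (LinearMap.injective_iff_surjective (f := (T : EuclideanSpace ℝ {i // i ∈ K} →ₗ[ℝ] EuclideanSpace ℝ {i // i ∈ K}))).mp hTinj⟩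
  -- T is a unit
  let e : EuclideanSpace ℝ {i // i ∈ K} ≃L[ℝ] EuclideanSpace ℝ {i // i ∈ K} :=
    (LinearEquiv.ofBijective (T : _ →ₗ[ℝ] _) hTbij).toContinuousLinearEquiv
  have heT : (e : EuclideanSpace ℝ {i // i ∈ K} →L[ℝ] EuclideanSpace ℝ {i // i ∈ K}) = T := by
    ext x; rfl
  let u : (EuclideanSpace ℝ {i // i ∈ K} →L[ℝ] EuclideanSpace ℝ {i // i ∈ K})ˣ :=
    ⟨T, e.symm.toContinuousLinearMap, ContinuousLinearMap.ext fun x => e.apply_symm_apply x,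
      ContinuousLinearMap.ext fun x => e.symm_apply_apply x⟩
  set G := Ring.inverse T with hG
  have hGu : G = (u⁻¹ : _ˣ) := by rw [hG]; exact Ring.inverse_unit u
  have hTG : T ∘L G = ContinuousLinearMap.id ℝ _ := by
    rw [hGu]; exact u.val_inv
  have hGT : G ∘L T = ContinuousLinearMap.id ℝ _ := by
    rw [hGu]; exact u.inv_val
  -- T equals A V₁ A*
  have hTeq : A ∘L V₁ ∘L A.adjoint = T := by
    rw [hT, hM, ContinuousLinearMap.adjoint_comp, ContinuousLinearMap.adjoint_adjoint, hV₁]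
    rfl
  -- key projection formula
  have hQval : ∀ v : H, Q v = v - M (G (M.adjoint v)) := by
    intro v
    have hmem : M (G (M.adjoint v)) ∈ LinearMap.range (M : EuclideanSpace ℝ {i // i ∈ K} →ₗ[ℝ] H) := ⟨_, rfl⟩
    have hproj : ((LinearMap.range (M : EuclideanSpace ℝ {i // i ∈ K} →ₗ[ℝ] H)).orthogonalProjectionOnto v : H) = M (G (M.adjoint v)) := by
      apply Submodule.eq_starProjection_of_mem_of_inner_eq_zero hmem
      rintro w ⟨y, rfl⟩
      have h1 : @inner ℝ _ _ v (M y) = @inner ℝ _ _ (M.adjoint v) y := (ContinuousLinearMap.adjoint_inner_left M y v).symm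
      have h2 : @inner ℝ _ _ (M (G (M.adjoint v))) (M y) = @inner ℝ _ _ (M.adjoint (M (G (M.adjoint v)))) y :=
        (ContinuousLinearMap.adjoint_inner_left M y _).symm
      have h3 : M.adjoint (M (G (M.adjoint v))) = M.adjoint v := by
        have := congrArg (fun f => f (M.adjoint v)) hTG
        simpa [hT] using this
      rw [inner_sub_left, ContinuousLinearMap.coe_coe, h1, h2, h3, sub_self]
    rw [hQ]
    simp only [ContinuousLinearMap.coe_comp', Function.comp_apply, Submodule.subtypeL_apply]
    rw [← Submodule.starProjection_apply, Submodule.starProjection_orthogonal_val,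
      Submodule.starProjection_apply, hproj]
  constructor
  · ext x
    have hPiKx : PiK (V₁₂ x) = A.adjoint (G (A (V₁₂ x))) := by
      rw [hPiK, hTeq]; rfl
    have hMadj : M.adjoint = A ∘L L₁.adjoint := by
      rw [hM, ContinuousLinearMap.adjoint_comp, ContinuousLinearMap.adjoint_adjoint]
    have key : L₁.adjoint (Q (L₂ x)) = V₁₂ x - V₁ (A.adjoint (G (A (V₁₂ x)))) := by
      rw [hQval (L₂ x), map_sub]
      congr 1
      · rw [hV₁₂]; rfl
      · rw [hM, hV₁, hMadj, hV₁₂]; rfl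
    simp only [ContinuousLinearMap.coe_comp', Function.comp_apply,
      ContinuousLinearMap.coe_sub', Pi.sub_apply]
    rw [key, hPiKx]
  · congr 1
    ext x
    have hPiKx : PiK (V₁₂ x) = A.adjoint (G (A (V₁₂ x))) := by
      rw [hPiK, hTeq]; rfl
    have hMadj : M.adjoint = A ∘L L₁.adjoint := by
      rw [hM, ContinuousLinearMap.adjoint_comp, ContinuousLinearMap.adjoint_adjoint]
    have key : L₁.adjoint (Q (L₂ x)) = V₁₂ x - V₁ (A.adjoint (G (A (V₁₂ x)))) := by
      rw [hQval (L₂ x), map_sub]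
      congr 1
      · rw [hV₁₂]; rfl
      · rw [hM, hV₁, hMadj, hV₁₂]; rfl
    simp only [ContinuousLinearMap.coe_comp', Function.comp_apply,
      ContinuousLinearMap.coe_sub', Pi.sub_apply]
    rw [key, hPiKx]
end
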